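/- Let ν > 0 and p = (ν + 1)/2. Then for every μ ≥ 0, ∫_μ^∞ (1 + x²/ν)^{−p} dx ≥ (√ν / (2p − 1)) (1 + μ²/ν)^{−p + 1/2}. -/

import Mathlib

open MeasureTheory Real Set Filter Topology

/-- **Lower bound on the Student-t survival integral.**
For `ν > 0`, `p = (ν + 1)/2`, and `μ ≥ 0`:
`∫_μ^∞ (1 + x²/ν)^{-p} dx ≥ (√ν / (2p - 1)) (1 + μ²/ν)^{-p + 1/2}`. -/
theorem stmt13 (ν : ℝ) (hν : 0 < ν) (p : ℝ) (hp : p = (ν + 1) / 2)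
    (μ : ℝ) (hμ : 0 ≤ μ) :
    Real.sqrt ν / (2 * p - 1) * (1 + μ ^ 2 / ν) ^ (-p + 1 / 2)
      ≤ ∫ x in Set.Ioi μ, (1 + x ^ 2 / ν) ^ (-p) := by
  have hνne : ν ≠ 0 := hν.ne'
  have hsq : Real.sqrt ν ^ 2 = ν := Real.sq_sqrt hν.le
  set s := Real.sqrt ν with hs
  have hspos : 0 < s := Real.sqrt_pos.2 hν
  have hbase : ∀ x : ℝ, (0:ℝ) < 1 + x^2/ν := fun x => by positivity
  have hbase1 : ∀ x : ℝ, (1:ℝ) ≤ 1 + x^2/ν := fun x => by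
    have : 0 ≤ x^2/ν := by positivity
    linarith
  -- continuity of the integrand
  have hcont : Continuous fun x : ℝ => (1 + x^2/ν) ^ (-p) := by
    apply Continuous.rpow_const (by continuity)
    exact fun x => Or.inl (hbase x).ne'
  -- integrability of f on Ioi μ
  have hfint : IntegrableOn (fun x => (1 + x^2/ν) ^ (-p)) (Ioi μ) := by
    set c := max μ 1 with hc
    have hc0 : (0:ℝ) < c := lt_of_lt_of_le one_pos (le_max_right _ _)
    have hsplit : Ioc μ c ∪ Ioi c = Ioi μ := Set.Ioc_union_Ioi_eq_Ioi (le_max_left _ _)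
    rw [← hsplit]
    apply IntegrableOn.union
    · exact hcont.integrableOn_Ioc
    · have hexp : -(2*p) < -1 := by rw [hp]; linarith
      have hbound : Integrable (fun x : ℝ => ν ^ p * x ^ (-(2*p)))
          (volume.restrict (Ioi c)) :=
        (integrableOn_Ioi_rpow_of_lt hexp hc0).const_mul _
      refine hbound.mono' (hcont.aestronglyMeasurable.restrict) ?_
      rw [ae_restrict_iff' measurableSet_Ioi]
      filter_upwards with x hx
      have hx0 : 0 < x := lt_of_le_of_lt hc0.le hx
      have h1 : x^2/ν ≤ 1 + x^2/ν := by linarith [hbase1 x]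
      have h2 : (1 + x^2/ν) ^ (-p) ≤ (x^2/ν) ^ (-p) := by
        apply Real.rpow_le_rpow_of_nonpos (by positivity) h1
        rw [hp]; linarith
      have h3 : (x^2/ν) ^ (-p) = ν ^ p * x ^ (-(2*p)) := by
        rw [Real.div_rpow (by positivity) hν.le, ← Real.rpow_natCast x 2,
          ← Real.rpow_mul hx0.le, Real.rpow_neg hν.le, div_inv_eq_mul]
        push_cast
        rw [show ((2:ℝ) * -p) = -(2*p) by ring, mul_comm]
      rw [Real.norm_eq_abs, abs_of_pos (Real.rpow_pos_of_pos (hbase x) _), ← h3]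
      exact h2
  -- the lower bounding function g
  set g : ℝ → ℝ := fun x => x / s * (1 + x^2/ν) ^ (-p - 1/2) with hg
  -- g ≤ f on Ioi μ
  have hgle : ∀ x ∈ Ioi μ, g x ≤ (1 + x^2/ν) ^ (-p) := by
    intro x hx
    have hx0 : 0 < x := lt_of_le_of_lt hμ hx
    have hA := hbase x
    have hxs : x / s ≤ (1 + x^2/ν) ^ ((1:ℝ)/2) := by
      have h1 : x / s = Real.sqrt (x^2/ν) := by
        rw [Real.sqrt_div (sq_nonneg x), Real.sqrt_sq hx0.le]
      rw [h1, ← Real.sqrt_eq_rpow]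
      exact Real.sqrt_le_sqrt (by linarith)
    have h4 : x / s * (1 + x^2/ν) ^ (-(1/2):ℝ) ≤ 1 := by
      rw [Real.rpow_neg hA.le, ← div_eq_mul_inv]
      exact (div_le_one (Real.rpow_pos_of_pos hA _)).2 hxs
    have h5 : g x = (x / s * (1 + x^2/ν) ^ (-(1/2):ℝ)) * (1 + x^2/ν) ^ (-p) := by
      have h6 : (-p - 1/2 : ℝ) = (-(1/2)) + (-p) := by ring
      simp only [hg]
      rw [h6, Real.rpow_add hA]
      ring
    rw [h5]
    calc (x / s * (1 + x^2/ν) ^ (-(1/2):ℝ)) * (1 + x^2/ν) ^ (-p)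
        ≤ 1 * (1 + x^2/ν) ^ (-p) :=
          mul_le_mul_of_nonneg_right h4 (Real.rpow_nonneg hA.le _)
      _ = (1 + x^2/ν) ^ (-p) := one_mul _
  -- g is nonnegative on Ioi μ
  have hgnn : ∀ x ∈ Ioi μ, 0 ≤ g x := by
    intro x hx
    have hx0 : 0 < x := lt_of_le_of_lt hμ hx
    have := Real.rpow_nonneg (hbase x).le (-p - 1/2)
    positivity
  -- g is integrable on Ioi μ
  have hgint : IntegrableOn g (Ioi μ) := by
    have hgm : Continuous g := by
      apply Continuous.mul (by continuity)
      apply Continuous.rpow_const (by continuity)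
      exact fun x => Or.inl (hbase x).ne'
    refine hfint.mono' hgm.aestronglyMeasurable.restrict ?_
    rw [ae_restrict_iff' measurableSet_Ioi]
    filter_upwards with x hx
    rw [Real.norm_eq_abs, abs_of_nonneg (hgnn x hx)]
    exact hgle x hx
  -- compute the integral of g
  have hkey : ∫ x in Ioi μ, g x = s / ν * (1 + μ^2/ν) ^ (-p + 1/2) := by
    have hF : ∀ x ∈ Ici μ, HasDerivAt
        (fun x => -(s/ν) * (1 + x^2/ν) ^ (-p + 1/2)) (g x) x := by
      intro x _
      have h1 : HasDerivAt (fun x : ℝ => 1 + x^2/ν) (2*x/ν) x := by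
        simpa using ((hasDerivAt_pow 2 x).div_const ν).const_add 1
      have h2 := (h1.rpow_const (p := -p + 1/2) (Or.inl (hbase x).ne')).const_mul (-(s/ν))
      refine h2.congr_deriv ?_
      symm
      have he : (-p + 1/2 - 1 : ℝ) = -p - 1/2 := by ring
      rw [he]
      simp only [hg]
      have hps : s ≠ 0 := hspos.ne'
      have h2p : (-p + 1/2 : ℝ) = -(ν/2) := by rw [hp]; ring
      rw [h2p]
      set B := (1 + x^2/ν) ^ (-p - 1/2) with hB
      field_simp
      ring_nf
      linear_combination (-x*B) * hsq
    have hT : Tendsto (fun x => -(s/ν) * (1 + x^2/ν) ^ (-p + 1/2)) atTop (𝓝 0) := by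
      have h0 : Tendsto (fun x : ℝ => 1 + x^2/ν) atTop atTop := by
        apply tendsto_atTop_add_const_left
        exact (tendsto_pow_atTop two_ne_zero).atTop_div_const hν
      have h1 : Tendsto (fun x : ℝ => (1 + x^2/ν) ^ (-p + 1/2)) atTop (𝓝 0) := by
        have hlt : (0:ℝ) < p - 1/2 := by rw [hp]; linarith
        have h2 := (tendsto_rpow_neg_atTop hlt).comp h0
        have he : (-(p - 1/2) : ℝ) = -p + 1/2 := by ring
        rw [← he]
        exact h2
      simpa using h1.const_mul (-(s/ν))
    have := integral_Ioi_of_hasDerivAt_of_tendsto' hF hgint hT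
    rw [this]
    ring
  -- conclude
  have hmono : ∫ x in Ioi μ, g x ≤ ∫ x in Ioi μ, (1 + x^2/ν) ^ (-p) :=
    setIntegral_mono_on hgint hfint measurableSet_Ioi hgle
  rw [hkey] at hmono
  have h2p : 2 * p - 1 = ν := by rw [hp]; ring
  have : s / (2*p-1) = s / ν := by rw [h2p]
  rw [this]
  exact hmono
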